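/- Let L⁻ = d²/dr² + b(r) d/dr + c(r) on I = (a,∞) with |b| and |c| bounded on [a,∞) and c(r) ≤ 0. Let f ∈ C²(I) ∩ C¹([a,∞)) satisfy L⁻ f = 0 and lim_{r→∞} f(r) = f_∞ finite. If f(a) > f_∞ ≥ 0 then f'(a) < 0. -/

import Mathlib

open Set Filter

/-- If `g` has a one-sided derivative `d` at the left endpoint `p` of `[p,q]` and `p` is a
maximum point of `g` on `[p,q]`, then `d ≤ 0`. -/
lemma aux_endpoint_nonpos {g : ℝ → ℝ} {d p q : ℝ} (hpq : p < q)
    (hd : HasDerivWithinAt g d (Set.Icc p q) p)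
    (hmax : ∀ x ∈ Set.Icc p q, g x ≤ g p) : d ≤ 0 := by
  have h1 : Filter.Tendsto (slope g p) (nhdsWithin p (Set.Icc p q \ {p})) (nhds d) :=
    hasDerivWithinAt_iff_tendsto_slope.mp hd
  have h2 : Filter.Tendsto (slope g p) (nhdsWithin p (Set.Ioo p q)) (nhds d) :=
    h1.mono_left (nhdsWithin_mono _ (fun x hx => ⟨⟨hx.1.le, hx.2.le⟩, ne_of_gt hx.1⟩))
  have hne := left_nhdsWithin_Ioo_neBot hpq
  refine le_of_tendsto h2 ?_
  filter_upwards [self_mem_nhdsWithin] with x hx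
  have hgx : g x ≤ g p := hmax x ⟨hx.1.le, hx.2.le⟩
  have hxp : 0 < x - p := sub_pos.mpr hx.1
  rw [slope_def_field]
  exact div_nonpos_of_nonpos_of_nonneg (by linarith) hxp.le

/-- If `g x₀ = 0` and `g` has positive derivative at `x₀`, then `g > 0` just to the right. -/
lemma aux_pos_right {g : ℝ → ℝ} {d x₀ : ℝ} (hd : HasDerivAt g d x₀) (hg0 : g x₀ = 0)
    (hdpos : 0 < d) : ∀ᶠ x in nhdsWithin x₀ (Set.Ioi x₀), 0 < g x := by
  have h1 : Filter.Tendsto (slope g x₀) (nhdsWithin x₀ {x₀}ᶜ) (nhds d) :=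
    hasDerivAt_iff_tendsto_slope.mp hd
  have h2 : Filter.Tendsto (slope g x₀) (nhdsWithin x₀ (Set.Ioi x₀)) (nhds d) :=
    h1.mono_left (nhdsWithin_mono _ (fun x hx => ne_of_gt hx))
  have h3 : ∀ᶠ x in nhdsWithin x₀ (Set.Ioi x₀), 0 < slope g x₀ x :=
    h2.eventually (eventually_gt_nhds hdpos)
  filter_upwards [h3, self_mem_nhdsWithin] with x hx hx'
  rw [slope_def_field, hg0, sub_zero] at hx
  have hxx : 0 < x - x₀ := sub_pos.mpr hx'
  have := mul_pos hx hxx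
  rwa [div_mul_cancel₀ _ (ne_of_gt hxx)] at this

theorem boundary_point_negative_derivative_exterior
    (a finf : ℝ) (ha : 0 < a) (b c f f' f'' : ℝ → ℝ)
    (hb : ∃ C : ℝ, ∀ r ∈ Set.Ici a, |b r| ≤ C)
    (hc : ∃ C : ℝ, ∀ r ∈ Set.Ici a, |c r| ≤ C)
    (hcneg : ∀ r ∈ Set.Ici a, c r ≤ 0)
    (hf1 : ∀ r ∈ Set.Ici a, HasDerivWithinAt f (f' r) (Set.Ici a) r)
    (hf1c : ContinuousOn f' (Set.Ici a))
    (hf2 : ∀ r ∈ Set.Ioi a, HasDerivAt f' (f'' r) r)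
    (hode : ∀ r ∈ Set.Ioi a, f'' r + b r * f' r + c r * f r = 0)
    (hlim : Filter.Tendsto f Filter.atTop (nhds finf))
    (hpos : 0 ≤ finf) (hgt : finf < f a) :
    f' a < 0 := by
  by_contra hcon
  push_neg at hcon
  obtain ⟨Cb, hCb⟩ := hb
  obtain ⟨Cc, hCc⟩ := hc
  have hCb0 : 0 ≤ Cb := le_trans (abs_nonneg _) (hCb a Set.self_mem_Ici)
  have hCc0 : 0 ≤ Cc := le_trans (abs_nonneg _) (hCc a Set.self_mem_Ici)
  set α : ℝ := Cb + Cc + 1 with hαdef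
  have hαpos : 0 < α := by linarith
  have hfc : ContinuousOn f (Set.Ici a) := fun r hr => (hf1 r hr).continuousWithinAt
  set μ : ℝ := (f a + finf) / 2 with hμdef
  have hμ1 : finf < μ := by rw [hμdef]; linarith
  have hμ2 : μ < f a := by rw [hμdef]; linarith
  have hμpos : 0 < μ := lt_of_le_of_lt hpos hμ1
  obtain ⟨R₀, hR₀⟩ := Filter.eventually_atTop.mp (hlim.eventually_lt_const hμ1)
  set R : ℝ := max R₀ (a + 1) with hRdef
  have haR : a < R := lt_of_lt_of_le (by linarith) (le_max_right _ _)
  have hfR : f R < μ := hR₀ R (le_max_left _ _)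
  -- maximum of f on [a, R]
  obtain ⟨r₀, hr₀mem, hr₀max⟩ := isCompact_Icc.exists_isMaxOn (Set.nonempty_Icc.mpr haR.le)
    (hfc.mono Set.Icc_subset_Ici_self)
  have hM : ∀ x ∈ Set.Icc a R, f x ≤ f r₀ := fun x hx => hr₀max hx
  have hMa : f a ≤ f r₀ := hM a ⟨le_rfl, haR.le⟩
  have hμM : μ < f r₀ := lt_of_lt_of_le hμ2 hMa
  have hMpos : 0 < f r₀ := lt_trans hμpos hμM
  have har₀ : a ≤ r₀ := hr₀mem.1
  have hr₀R : r₀ < R := by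
    rcases lt_or_eq_of_le hr₀mem.2 with h | h
    · exact h
    · exfalso; rw [h] at hμM; linarith
  -- f' r₀ = 0
  have hf'r₀ : f' r₀ = 0 := by
    rcases eq_or_lt_of_le har₀ with heq | hlt
    · have h1 : f' a ≤ 0 := by
        refine aux_endpoint_nonpos haR ((hf1 a Set.self_mem_Ici).mono Set.Icc_subset_Ici_self) ?_
        intro x hx
        rw [← heq] at hM
        exact hM x hx
      rw [← heq]
      linarith
    · have hnhds : Set.Icc a R ∈ nhds r₀ := Icc_mem_nhds hlt hr₀R
      have hloc : IsLocalMax f r₀ := Filter.eventually_of_mem hnhds (fun x hx => hM x hx)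
      have hder : HasDerivAt f (f' r₀) r₀ :=
        (hf1 r₀ (le_of_lt hlt)).hasDerivAt (Ici_mem_nhds hlt)
      exact hloc.hasDerivAt_eq_zero hder
  -- barrier
  set E : ℝ → ℝ := fun r => Real.exp (α * (r - r₀)) with hEdef
  have hEder : ∀ r, HasDerivAt E (α * E r) r := by
    intro r
    have h1 : HasDerivAt (fun r : ℝ => α * (r - r₀)) α r := by
      simpa using ((hasDerivAt_id r).sub_const r₀).const_mul α
    simpa [hEdef, mul_comm, Function.comp_def] using (Real.hasDerivAt_exp (α * (r - r₀))).comp r h1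
  have hEr₀ : E r₀ = 1 := by simp [hEdef]
  have hEpos : ∀ r, 0 < E r := fun r => Real.exp_pos _
  have hEmono : ∀ {x y : ℝ}, x ≤ y → E x ≤ E y := by
    intro x y hxy
    exact Real.exp_le_exp.mpr (by nlinarith)
  have hER : 1 < E R := by
    have h : (0:ℝ) < α * (R - r₀) := mul_pos hαpos (by linarith)
    exact Real.one_lt_exp_iff.mpr h
  set ε : ℝ := (f r₀ - μ) / (2 * (E R - 1)) with hεdef
  have hεpos : 0 < ε := div_pos (by linarith) (by linarith)
  have hεER : ε * (E R - 1) = (f r₀ - μ) / 2 := by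
    have hne : E R - 1 ≠ 0 := ne_of_gt (by linarith)
    rw [hεdef, div_mul_eq_mul_div, mul_comm (f r₀ - μ) (E R - 1), mul_comm 2 (E R - 1),
      mul_div_mul_left _ _ hne]
  set w : ℝ → ℝ := fun r => f r + ε * (E r - 1) with hwdef
  set w' : ℝ → ℝ := fun r => f' r + ε * (α * E r) with hw'def
  have hwr₀ : w r₀ = f r₀ := by simp [hwdef, hEr₀]
  have hwR : w R < f r₀ := by
    have h1 : w R = f R + ε * (E R - 1) := rfl
    rw [h1, hεER]; linarith
  have hwd : ∀ r ∈ Set.Ioi a, HasDerivAt w (w' r) r := by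
    intro r hr
    have h1 : HasDerivAt f (f' r) r := (hf1 r (Set.mem_Ici.mpr (le_of_lt hr))).hasDerivAt (Ici_mem_nhds hr)
    have h2 : HasDerivAt (fun r => ε * (E r - 1)) (ε * (α * E r)) r :=
      ((hEder r).sub_const 1).const_mul ε
    exact h1.add h2
  have hwc : ContinuousOn w (Set.Ici a) := by
    have h2 : Continuous fun r => ε * (E r - 1) := by
      simp only [hEdef]; fun_prop
    exact hfc.add h2.continuousOn
  -- maximum of w on [r₀, R]
  obtain ⟨x₀, hx₀mem, hx₀max⟩ := isCompact_Icc.exists_isMaxOn (Set.nonempty_Icc.mpr hr₀R.le)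
    (hwc.mono (fun x hx => le_trans har₀ hx.1))
  have hwmax : ∀ x ∈ Set.Icc r₀ R, w x ≤ w x₀ := fun x hx => hx₀max hx
  have hwx₀ : f r₀ ≤ w x₀ := hwr₀ ▸ hwmax r₀ ⟨le_rfl, hr₀R.le⟩
  have hx₀R : x₀ < R := by
    rcases lt_or_eq_of_le hx₀mem.2 with h | h
    · exact h
    · exfalso; rw [h] at hwx₀; linarith
  rcases eq_or_lt_of_le hx₀mem.1 with heq | hlt
  · -- max at the left endpoint r₀, but w'(r₀) = ε α > 0
    have hd : HasDerivWithinAt w (w' r₀) (Set.Icc r₀ R) r₀ := by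
      have h1 : HasDerivWithinAt f (f' r₀) (Set.Icc r₀ R) r₀ :=
        (hf1 r₀ har₀).mono (fun x hx => le_trans har₀ hx.1)
      have h2 : HasDerivWithinAt (fun r => ε * (E r - 1)) (ε * (α * E r₀)) (Set.Icc r₀ R) r₀ :=
        (((hEder r₀).sub_const 1).const_mul ε).hasDerivWithinAt
      exact h1.add h2
    have h1 : w' r₀ ≤ 0 := by
      refine aux_endpoint_nonpos hr₀R hd ?_
      intro x hx
      rw [← heq] at hwmax
      exact hwmax x hx
    have h2 : w' r₀ = ε * α := by simp [hw'def, hf'r₀, hEr₀]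
    nlinarith [mul_pos hεpos hαpos]
  · -- interior maximum x₀ ∈ (r₀, R)
    have hx₀a : a < x₀ := lt_of_le_of_lt har₀ hlt
    have hnhds : Set.Icc r₀ R ∈ nhds x₀ := Icc_mem_nhds hlt hx₀R
    have hloc : IsLocalMax w x₀ := Filter.eventually_of_mem hnhds (fun x hx => hwmax x hx)
    have hw'0 : w' x₀ = 0 := hloc.hasDerivAt_eq_zero (hwd x₀ hx₀a)
    have hderw' : HasDerivAt w' (f'' x₀ + ε * (α * (α * E x₀))) x₀ := by
      have h2 : HasDerivAt (fun r => ε * (α * E r)) (ε * (α * (α * E x₀))) x₀ := by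
        simpa [mul_assoc, mul_comm, mul_left_comm] using ((hEder x₀).const_mul α).const_mul ε
      exact (hf2 x₀ hx₀a).add h2
    -- f x₀ is large
    have hfx₀ : (f r₀ + μ) / 2 ≤ f x₀ := by
      have h1 : E x₀ - 1 ≤ E R - 1 := by linarith [hEmono hx₀R.le]
      have h2 : ε * (E x₀ - 1) ≤ (f r₀ - μ) / 2 := by
        rw [← hεER]; exact mul_le_mul_of_nonneg_left h1 hεpos.le
      have h3 : f r₀ ≤ f x₀ + ε * (E x₀ - 1) := hwx₀
      linarith
    have hfx₀pos : 0 < f x₀ := by linarith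
    have hf'x₀ : f' x₀ = -(ε * (α * E x₀)) := by
      have : f' x₀ + ε * (α * E x₀) = 0 := hw'0
      linarith
    have hode' := hode x₀ hx₀a
    have hbx : -Cb ≤ b x₀ := (abs_le.mp (hCb x₀ hx₀a.le)).1
    have hcx : c x₀ ≤ 0 := hcneg x₀ hx₀a.le
    have hP : 0 < ε * (α * E x₀) := mul_pos hεpos (mul_pos hαpos (hEpos x₀))
    have hdpos : 0 < f'' x₀ + ε * (α * (α * E x₀)) := by
      have hf'' : f'' x₀ = -(b x₀ * f' x₀) - c x₀ * f x₀ := by linarith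
      rw [hf'', hf'x₀]
      have key : -(b x₀ * -(ε * (α * E x₀))) - c x₀ * f x₀ + ε * (α * (α * E x₀)) =
          (b x₀ + α) * (ε * (α * E x₀)) + -c x₀ * f x₀ := by ring
      rw [key]
      have hc1 : 0 ≤ -c x₀ * f x₀ := mul_nonneg (by linarith) hfx₀pos.le
      have h5 : (1:ℝ) ≤ b x₀ + α := by rw [hαdef]; linarith
      have h6 : ε * (α * E x₀) ≤ (b x₀ + α) * (ε * (α * E x₀)) :=
        le_mul_of_one_le_left hP.le h5
      linarith
    have hev := aux_pos_right hderw' hw'0 hdpos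
    obtain ⟨u, hu, hsub⟩ := (nhdsGT_basis x₀).eventually_iff.mp hev
    set x₁ : ℝ := min ((x₀ + u) / 2) ((x₀ + R) / 2) with hx₁def
    have hx₁1 : x₀ < x₁ := lt_min (by linarith) (by linarith)
    have hx₁u : x₁ < u := lt_of_le_of_lt (min_le_left _ _) (by linarith)
    have hx₁R : x₁ < R := lt_of_le_of_lt (min_le_right _ _) (by linarith)
    obtain ⟨ξ, hξmem, hξ⟩ := exists_hasDerivAt_eq_slope w w' hx₁1
      (hwc.mono (fun x hx => le_trans hx₀a.le hx.1))
      (fun x hx => hwd x (lt_trans hx₀a hx.1))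
    have hξpos : 0 < w' ξ := hsub ⟨hξmem.1, lt_trans hξmem.2 hx₁u⟩
    have hslope : 0 < (w x₁ - w x₀) / (x₁ - x₀) := hξ ▸ hξpos
    have hgt' : w x₀ < w x₁ := by
      have hxx : 0 < x₁ - x₀ := sub_pos.mpr hx₁1
      have h := mul_pos hslope hxx
      rw [div_mul_cancel₀ _ (ne_of_gt hxx)] at h
      linarith
    have : w x₁ ≤ w x₀ := hwmax x₁ ⟨le_trans hlt.le hx₁1.le, hx₁R.le⟩
    linarith
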